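/- Let σ be a bijection of the set of all Young diagrams onto itself such that |σ(μ)| = |μ| for every Young diagram μ, and such that for all Young diagrams μ, ν: ν is covered by μ if and only if σ(ν) is covered by σ(μ). Then either σ(μ) = μ for all μ, or σ(μ) = μᵀ for all μ. In other words, the only rank-preserving automorphisms of the branching graph (Young's lattice) are the identity and transposition. -/

import Mathlib

/-- A Young diagram `ν` is covered by `μ`: `ν ⊆ μ` and `|μ| = |ν| + 1`. -/
def CoveredBy (ν μ : YoungDiagram) : Prop :=
  ν ≤ μ ∧ μ.card = ν.card + 1

namespace YL
open YoungDiagram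

/-- removable corner -/
def Removable (μ : YoungDiagram) (c : ℕ × ℕ) : Prop :=
  c ∈ μ ∧ (c.1 + 1, c.2) ∉ μ ∧ (c.1, c.2 + 1) ∉ μ

lemma isLowerSet_erase {μ : YoungDiagram} {c : ℕ × ℕ} (h : Removable μ c) :
    IsLowerSet (↑(μ.cells.erase c) : Set (ℕ × ℕ)) := by
  intro y x hle hy
  simp only [Finset.coe_erase, Set.mem_diff, Finset.mem_coe, mem_cells,
    Set.mem_singleton_iff] at hy ⊢
  obtain ⟨hc, h1, h2⟩ := h
  refine ⟨μ.isLowerSet hle hy.1, ?_⟩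
  intro hxc
  rw [hxc] at hle
  rcases Prod.le_def.mp hle with ⟨ha, hb⟩
  have hne : c.1 < y.1 ∨ c.2 < y.2 := by
    by_contra hcon
    push_neg at hcon
    exact hy.2 (Prod.ext (le_antisymm ha hcon.1) (le_antisymm hb hcon.2)).symm
  rcases hne with h' | h'
  · exact h1 (μ.up_left_mem h' hb hy.1)
  · exact h2 (μ.up_left_mem ha h' hy.1)

/-- erase a removable corner -/
def erase (μ : YoungDiagram) (c : ℕ × ℕ) (h : Removable μ c) : YoungDiagram :=
  ⟨μ.cells.erase c, isLowerSet_erase h⟩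

lemma coveredBy_erase {μ : YoungDiagram} {c : ℕ × ℕ} (h : Removable μ c) :
    CoveredBy (erase μ c h) μ := by
  constructor
  · intro x hx
    exact Finset.mem_of_mem_erase hx
  · show μ.cells.card = (μ.cells.erase c).card + 1
    show μ.cells.card = (μ.cells.erase c).card + 1
    rw [Finset.card_erase_of_mem h.1]
    have : 0 < μ.cells.card := Finset.card_pos.mpr ⟨c, h.1⟩
    omega

lemma exists_removable_of_coveredBy {ν μ : YoungDiagram} (h : CoveredBy ν μ) :
    ∃ c, ∃ hc : Removable μ c, ν = erase μ c hc := by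
  obtain ⟨hle, hcard⟩ := h
  have hcard' : μ.cells.card = ν.cells.card + 1 := hcard
  have hsub : ν.cells ⊆ μ.cells := fun x hx => hle hx
  have : (μ.cells \ ν.cells).card = 1 := by
    rw [Finset.card_sdiff_of_subset hsub]; omega
  obtain ⟨c, hc⟩ := Finset.card_eq_one.mp this
  have hcm : c ∈ μ.cells ∧ c ∉ ν.cells := by
    have := hc ▸ Finset.mem_singleton_self c
    exact Finset.mem_sdiff.mp this
  have hrem : Removable μ c := by
    refine ⟨hcm.1, ?_, ?_⟩ <;> intro hmem
    · have hne : (c.1 + 1, c.2) ≠ c := by simp [Prod.ext_iff]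
      have : (c.1 + 1, c.2) ∈ ν.cells := by
        by_contra hno
        have : (c.1 + 1, c.2) ∈ μ.cells \ ν.cells := Finset.mem_sdiff.mpr ⟨hmem, hno⟩
        rw [hc, Finset.mem_singleton] at this
        exact hne this
      exact hcm.2 (mem_cells _ |>.mpr (ν.up_left_mem (Nat.le_succ _) le_rfl (mem_cells _ |>.mp this)))
    · have hne : (c.1, c.2 + 1) ≠ c := by simp [Prod.ext_iff]
      have : (c.1, c.2 + 1) ∈ ν.cells := by
        by_contra hno
        have : (c.1, c.2 + 1) ∈ μ.cells \ ν.cells := Finset.mem_sdiff.mpr ⟨hmem, hno⟩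
        rw [hc, Finset.mem_singleton] at this
        exact hne this
      exact hcm.2 (mem_cells _ |>.mpr (ν.up_left_mem le_rfl (Nat.le_succ _) (mem_cells _ |>.mp this)))
  refine ⟨c, hrem, ?_⟩
  have : ν.cells = μ.cells.erase c := by
    have hd : μ.cells \ ν.cells = {c} := hc
    apply Finset.eq_of_subset_of_card_le
    · intro x hx
      exact Finset.mem_erase.mpr ⟨fun h' => hcm.2 (h' ▸ hx), hsub hx⟩
    · rw [Finset.card_erase_of_mem hcm.1]; omega
  exact YoungDiagram.ext this

lemma exists_removable {μ : YoungDiagram} (h : μ ≠ ⊥) : ∃ c, Removable μ c := by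
  have hne : μ.cells.Nonempty := by
    rw [Finset.nonempty_iff_ne_empty]
    intro hc
    exact h (YoungDiagram.ext (hc.trans YoungDiagram.cells_bot.symm))
  obtain ⟨c, hc, hmax⟩ := Finset.exists_max_image μ.cells (fun c => c.1 + c.2) hne
  refine ⟨c, (YoungDiagram.mem_cells c).mp hc, ?_, ?_⟩ <;> intro hmem <;>
    · have := hmax _ ((YoungDiagram.mem_cells _).mpr hmem)
      simp at this
      try omega

lemma removable_eq_of_erase_eq {μ : YoungDiagram} {c₁ c₂ : ℕ × ℕ}
    (h₁ : Removable μ c₁) (h₂ : Removable μ c₂)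
    (h : erase μ c₁ h₁ = erase μ c₂ h₂) : c₁ = c₂ := by
  by_contra hne
  have : c₁ ∈ (erase μ c₂ h₂).cells := Finset.mem_erase.mpr ⟨hne, h₁.1⟩
  rw [← h] at this
  exact (Finset.notMem_erase c₁ μ.cells) this

/-- If μ covers a unique diagram, μ has a unique removable corner. -/
lemma unique_removable {μ : YoungDiagram} (hb : μ ≠ ⊥)
    (h : ∀ ν₁ ν₂, CoveredBy ν₁ μ → CoveredBy ν₂ μ → ν₁ = ν₂) :
    ∃ c, ∃ hc : Removable μ c, ∀ c' (hc' : Removable μ c'), c' = c := by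
  obtain ⟨c, hc⟩ := exists_removable hb
  refine ⟨c, hc, fun c' hc' => ?_⟩
  exact removable_eq_of_erase_eq hc' hc
    (h _ _ (coveredBy_erase hc') (coveredBy_erase hc))

/-- A diagram with a unique removable corner is a rectangle. -/
lemma rect_of_unique_removable {μ : YoungDiagram} {c : ℕ × ℕ} (hc : Removable μ c)
    (huniq : ∀ c' (hc' : Removable μ c'), c' = c) :
    ∃ a b : ℕ, 0 < a ∧ 0 < b ∧ c = (b - 1, a - 1) ∧
      (∀ i j : ℕ, (i, j) ∈ μ ↔ i < b ∧ j < a) := by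
  -- descents give removable corners
  have hdesc : ∀ i, μ.rowLen (i + 1) < μ.rowLen i → Removable μ (i, μ.rowLen i - 1) := by
    intro i hi
    have hpos : 0 < μ.rowLen i := lt_of_le_of_lt (Nat.zero_le _) hi
    refine ⟨?_, ?_, ?_⟩ <;>
      · simp only [YoungDiagram.mem_iff_lt_rowLen]; omega
  obtain ⟨i₀, j₀⟩ := c
  have hrl : μ.rowLen i₀ = j₀ + 1 := by
    obtain ⟨h1, h2, h3⟩ := hc
    rw [YoungDiagram.mem_iff_lt_rowLen] at h1 h3
    simp only at h1 h3
    omega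
  -- unique descent at i₀
  have hd₀ : μ.rowLen (i₀ + 1) < μ.rowLen i₀ := by
    have h2 := hc.2.1
    rw [YoungDiagram.mem_iff_lt_rowLen] at h2
    simp only at h2
    omega
  have honly : ∀ i, μ.rowLen (i + 1) < μ.rowLen i → i = i₀ := by
    intro i hi
    have := huniq _ (hdesc i hi)
    exact (Prod.ext_iff.mp this).1
  -- rows ≤ i₀ have length j₀ + 1
  have hconst : ∀ k i, i + k = i₀ → μ.rowLen i = j₀ + 1 := by
    intro k
    induction k with
    | zero => intro i hi; rw [show i = i₀ by omega, hrl]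
    | succ k ih =>
      intro i hi
      have h1 : μ.rowLen (i + 1) = j₀ + 1 := ih (i + 1) (by omega)
      have h2 : μ.rowLen (i + 1) ≤ μ.rowLen i := μ.rowLen_anti i (i + 1) (by omega)
      rcases Nat.eq_or_lt_of_le h2 with h | h
      · omega
      · have := honly i h; omega
  -- rows > i₀ are empty
  have hzero : ∀ i, i₀ < i → μ.rowLen i = 0 := by
    intro i hi
    by_contra hne
    -- take the largest nonempty row
    have hbdd : ∀ k, 0 < μ.rowLen k → k < μ.colLen 0 := by
      intro k hk
      rw [← YoungDiagram.mem_iff_lt_colLen, YoungDiagram.mem_iff_lt_rowLen]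
      omega
    -- strong induction downward: find a descent ≥ i
    have : ∃ m, 0 < μ.rowLen m ∧ μ.rowLen (m + 1) = 0 ∧ i ≤ m := by
      by_contra hcon
      push_neg at hcon
      have grow : ∀ n, 0 < μ.rowLen (i + n) := by
        intro n
        induction n with
        | zero => simpa using Nat.pos_of_ne_zero hne
        | succ n ih =>
          simp only [Nat.add_succ]
          rcases Nat.eq_zero_or_pos (μ.rowLen (i + n + 1)) with h0 | h
          · have := hcon (i + n) ih h0
            omega
          · exact h
      have := hbdd (i + μ.colLen 0) (grow (μ.colLen 0))
      omega
    obtain ⟨m, hm1, hm2, hm3⟩ := this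
    have : m = i₀ := honly m (by omega)
    omega
  refine ⟨j₀ + 1, i₀ + 1, by omega, by omega, by simp, fun i j => ?_⟩
  rw [YoungDiagram.mem_iff_lt_rowLen]
  rcases Nat.lt_or_ge i (i₀ + 1) with h | h
  · rw [hconst (i₀ - i) i (by omega)]; omega
  · rw [hzero i (by omega)]; omega


lemma rect_cells {μ : YoungDiagram} {a b : ℕ}
    (h : ∀ i j : ℕ, (i, j) ∈ μ ↔ i < b ∧ j < a) :
    μ.cells = Finset.range b ×ˢ Finset.range a := by
  ext ⟨i, j⟩
  simp [Finset.mem_product, h i j, YoungDiagram.mem_cells]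

lemma rect_card {μ : YoungDiagram} {a b : ℕ}
    (h : ∀ i j : ℕ, (i, j) ∈ μ ↔ i < b ∧ j < a) : μ.card = a * b := by
  show μ.cells.card = a * b
  rw [rect_cells h, Finset.card_product]
  simp [Nat.mul_comm]

/-- asymmetric contradiction lemma -/
lemma rect_asym {ν μ₁ μ₂ : YoungDiagram} {a b c d : ℕ}
    (ha : 0 < a) (hb : 0 < b) (hc : 0 < c) (hd : 0 < d)
    (h₁ : ∀ i j : ℕ, (i, j) ∈ μ₁ ↔ i < b ∧ j < a)
    (h₂ : ∀ i j : ℕ, (i, j) ∈ μ₂ ↔ i < d ∧ j < c)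
    (hν₁ : ν.cells = μ₁.cells.erase (b - 1, a - 1))
    (hν₂ : ν.cells = μ₂.cells.erase (d - 1, c - 1))
    (hbd : b < d) (hca : c < a) (hcard : 2 ≤ ν.card) : False := by
  have hsub : ∀ x : ℕ × ℕ, x ∈ ν.cells → x ∈ μ₂ := by
    intro x hx
    rw [hν₂] at hx
    exact (YoungDiagram.mem_cells _).mp (Finset.mem_of_mem_erase hx)
  have hcards : a * b = c * d := by
    have e₁ : (b - 1, a - 1) ∈ μ₁.cells :=
      (YoungDiagram.mem_cells _).mpr ((h₁ _ _).mpr ⟨by omega, by omega⟩)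
    have e₂ : (d - 1, c - 1) ∈ μ₂.cells :=
      (YoungDiagram.mem_cells _).mpr ((h₂ _ _).mpr ⟨by omega, by omega⟩)
    have c₁ : ν.cells.card = μ₁.cells.card - 1 := by rw [hν₁, Finset.card_erase_of_mem e₁]
    have c₂ : ν.cells.card = μ₂.cells.card - 1 := by rw [hν₂, Finset.card_erase_of_mem e₂]
    have r₁ : μ₁.cells.card = a * b := rect_card h₁
    have r₂ : μ₂.cells.card = c * d := rect_card h₂
    have p₁ : 0 < μ₁.cells.card := Finset.card_pos.mpr ⟨_, e₁⟩
    have p₂ : 0 < μ₂.cells.card := Finset.card_pos.mpr ⟨_, e₂⟩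
    omega
  have hcard3 : 3 ≤ a * b := by
    have e₁ : (b - 1, a - 1) ∈ μ₁.cells :=
      (YoungDiagram.mem_cells _).mpr ((h₁ _ _).mpr ⟨by omega, by omega⟩)
    have c₁ : ν.cells.card = μ₁.cells.card - 1 := by rw [hν₁, Finset.card_erase_of_mem e₁]
    have r₁ : μ₁.cells.card = a * b := rect_card h₁
    have : 2 ≤ ν.cells.card := hcard
    omega
  -- first: b = 1
  have hb1 : b = 1 := by
    by_contra hb1
    have hx : ((0 : ℕ), a - 1) ∈ ν.cells := by
      rw [hν₁]
      refine Finset.mem_erase.mpr ⟨?_, (YoungDiagram.mem_cells _).mpr ((h₁ _ _).mpr ⟨by omega, by omega⟩)⟩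
      intro hh
      have := (Prod.ext_iff.mp hh).1
      simp at this
      omega
    have := (h₂ _ _).mp (hsub _ hx)
    omega
  subst hb1
  -- μ₁ is a single row of a ≥ 3 cells
  have ha3 : 3 ≤ a := by omega
  have hx : ((0 : ℕ), a - 2) ∈ ν.cells := by
    rw [hν₁]
    refine Finset.mem_erase.mpr ⟨?_, (YoungDiagram.mem_cells _).mpr ((h₁ _ _).mpr ⟨by omega, by omega⟩)⟩
    intro hh
    have := (Prod.ext_iff.mp hh).2
    simp at this
    omega
  have hac : a - 2 < c := ((h₂ _ _).mp (hsub _ hx)).2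
  -- c = a - 1, then (a-1) * d = a with d ≥ 2
  have : c = a - 1 := by omega
  subst this
  -- hcards : a * 1 = (a - 1) * d, d ≥ 2
  have h2d : 2 ≤ d := by omega
  have hmul : (a - 1) * 2 ≤ (a - 1) * d := Nat.mul_le_mul_left _ h2d
  omega

/-- key uniqueness: two diagrams each covering only ν (with |ν| ≥ 2) are equal. -/
lemma unique_cover_ext {ν μ₁ μ₂ : YoungDiagram} (hν : 2 ≤ ν.card)
    (hc₁ : CoveredBy ν μ₁) (hc₂ : CoveredBy ν μ₂)
    (hu₁ : ∀ ρ₁ ρ₂, CoveredBy ρ₁ μ₁ → CoveredBy ρ₂ μ₁ → ρ₁ = ρ₂)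
    (hu₂ : ∀ ρ₁ ρ₂, CoveredBy ρ₁ μ₂ → CoveredBy ρ₂ μ₂ → ρ₁ = ρ₂) :
    μ₁ = μ₂ := by
  have hbot : ∀ μ : YoungDiagram, CoveredBy ν μ → μ ≠ ⊥ := by
    intro μ hcov hb
    have := hcov.2
    rw [hb] at this
    have : (⊥ : YoungDiagram).card = 0 := by simp [YoungDiagram.card, YoungDiagram.cells_bot]
    omega
  obtain ⟨c₁, hrc₁, hq₁⟩ := unique_removable (hbot _ hc₁) hu₁
  obtain ⟨c₂, hrc₂, hq₂⟩ := unique_removable (hbot _ hc₂) hu₂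
  obtain ⟨a, b, ha, hb, hcab, hrect₁⟩ := rect_of_unique_removable hrc₁ hq₁
  obtain ⟨c, d, hcpos, hdpos, hccd, hrect₂⟩ := rect_of_unique_removable hrc₂ hq₂
  -- ν is μᵢ minus its corner
  have hν₁ : ν.cells = μ₁.cells.erase (b - 1, a - 1) := by
    obtain ⟨e, he, hee⟩ := exists_removable_of_coveredBy hc₁
    have : e = c₁ := hq₁ e he
    rw [hee]
    show (μ₁.cells.erase e) = _
    rw [this, hcab]
  have hν₂ : ν.cells = μ₂.cells.erase (d - 1, c - 1) := by
    obtain ⟨e, he, hee⟩ := exists_removable_of_coveredBy hc₂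
    have : e = c₂ := hq₂ e he
    rw [hee]
    show (μ₂.cells.erase e) = _
    rw [this, hccd]
  -- main case analysis
  by_cases heq : (b - 1, a - 1) = ((d - 1 : ℕ), (c - 1 : ℕ))
  · -- same corner: a = c, b = d
    have hab : b - 1 = d - 1 ∧ a - 1 = c - 1 := Prod.ext_iff.mp heq
    have : a = c ∧ b = d := by omega
    apply YoungDiagram.ext
    rw [rect_cells hrect₁, rect_cells hrect₂, this.1, this.2]
  · -- corners differ
    have hne₂ : (d - 1, c - 1) ∉ μ₁ := by
      intro hmem
      have : ((d : ℕ) - 1, (c : ℕ) - 1) ∈ ν.cells := by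
        rw [hν₁]
        exact Finset.mem_erase.mpr ⟨fun h => heq h.symm, (YoungDiagram.mem_cells _).mpr hmem⟩
      rw [hν₂] at this
      exact Finset.notMem_erase _ _ this
    have hne₁ : (b - 1, a - 1) ∉ μ₂ := by
      intro hmem
      have : ((b : ℕ) - 1, (a : ℕ) - 1) ∈ ν.cells := by
        rw [hν₂]
        exact Finset.mem_erase.mpr ⟨heq, (YoungDiagram.mem_cells _).mpr hmem⟩
      rw [hν₁] at this
      exact Finset.notMem_erase _ _ this
    have hne₂' : ¬(d - 1 < b ∧ c - 1 < a) := fun h => hne₂ ((hrect₁ _ _).mpr h)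
    have hne₁' : ¬(b - 1 < d ∧ a - 1 < c) := fun h => hne₁ ((hrect₂ _ _).mpr h)
    by_cases hd1 : b ≤ d - 1
    · have hca : ¬(a - 1 < c) := fun h => hne₁' ⟨by omega, h⟩
      exact (rect_asym ha hb hcpos hdpos hrect₁ hrect₂ hν₁ hν₂ (by omega) (by omega) hν).elim
    · have hac : ¬(c - 1 < a) := fun h => hne₂' ⟨by omega, h⟩
      have hbd : ¬(b - 1 < d) := fun h => hne₁' ⟨h, by omega⟩
      exact (rect_asym hcpos hdpos ha hb hrect₂ hrect₁ hν₂ hν₁ (by omega) (by omega) hν).elim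

/-- the single-cell diagram -/
def single : YoungDiagram :=
  ⟨{(0, 0)}, by
    intro a b hle ha
    simp only [Finset.coe_singleton, Set.mem_singleton_iff] at ha ⊢
    subst ha
    rcases Prod.le_def.mp hle with ⟨h1, h2⟩
    exact Prod.ext (Nat.le_zero.mp h1) (Nat.le_zero.mp h2)⟩

/-- the horizontal domino -/
def horiz : YoungDiagram :=
  ⟨{(0, 0), (0, 1)}, by
    intro a b hle ha
    simp only [Finset.coe_insert, Finset.coe_singleton, Set.mem_insert_iff,
      Set.mem_singleton_iff] at ha ⊢
    rcases Prod.le_def.mp hle with ⟨h1, h2⟩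
    rcases ha with rfl | rfl <;>
      [skip; skip] <;>
      · simp only [Prod.ext_iff]
        omega⟩

/-- the vertical domino -/
def vert : YoungDiagram :=
  ⟨{(0, 0), (1, 0)}, by
    intro a b hle ha
    simp only [Finset.coe_insert, Finset.coe_singleton, Set.mem_insert_iff,
      Set.mem_singleton_iff] at ha ⊢
    rcases Prod.le_def.mp hle with ⟨h1, h2⟩
    rcases ha with rfl | rfl <;>
      · simp only [Prod.ext_iff]
        omega⟩

lemma horiz_ne_vert : horiz ≠ vert := by
  intro h
  have : ((0 : ℕ), (1 : ℕ)) ∈ horiz := by rw [← YoungDiagram.mem_cells]; simp [horiz]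
  rw [h] at this
  rw [← YoungDiagram.mem_cells] at this
  simp [vert, YoungDiagram.mem_mk, Prod.ext_iff] at this

lemma transpose_horiz : horiz.transpose = vert := by
  ext ⟨i, j⟩
  rw [YoungDiagram.mem_cells, YoungDiagram.mem_cells, YoungDiagram.mem_transpose]
  show (j, i) ∈ ({((0:ℕ), (0:ℕ)), (0, 1)} : Finset (ℕ × ℕ)) ↔
    (i, j) ∈ ({((0:ℕ), (0:ℕ)), (1, 0)} : Finset (ℕ × ℕ))
  simp [Prod.ext_iff]
  omega

lemma transpose_vert : vert.transpose = horiz := by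
  rw [← transpose_horiz, YoungDiagram.transpose_transpose]

lemma card_transpose (μ : YoungDiagram) : μ.transpose.card = μ.card :=
  Finset.card_map _

lemma coveredBy_transpose_iff {ν μ : YoungDiagram} :
    CoveredBy ν.transpose μ.transpose ↔ CoveredBy ν μ := by
  unfold CoveredBy
  rw [YoungDiagram.transpose_le_iff, card_transpose, card_transpose]

lemma card_bot : (⊥ : YoungDiagram).card = 0 := by
  show (⊥ : YoungDiagram).cells.card = 0
  simp [YoungDiagram.cells_bot]

lemma eq_bot_of_card_eq_zero {μ : YoungDiagram} (h : μ.card = 0) : μ = ⊥ :=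
  YoungDiagram.ext (by rw [Finset.card_eq_zero.mp h, YoungDiagram.cells_bot])

lemma zero_mem {μ : YoungDiagram} {c : ℕ × ℕ} (hc : c ∈ μ) : (0, 0) ∈ μ :=
  μ.up_left_mem (Nat.zero_le _) (Nat.zero_le _) hc

lemma classify1 {μ : YoungDiagram} (h : μ.card = 1) : μ = single := by
  obtain ⟨x, hx⟩ := Finset.card_eq_one.mp h
  have hxm : x ∈ μ := (YoungDiagram.mem_cells x).mp (hx ▸ Finset.mem_singleton_self x)
  have h0 : ((0 : ℕ), (0 : ℕ)) ∈ μ.cells := (YoungDiagram.mem_cells _).mpr (zero_mem hxm)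
  rw [hx, Finset.mem_singleton] at h0
  apply YoungDiagram.ext
  rw [hx, ← h0]
  rfl

lemma classify2 {μ : YoungDiagram} (h : μ.card = 2) : μ = horiz ∨ μ = vert := by
  have h' : μ.cells.card = 2 := h
  have hne : μ.cells.Nonempty := Finset.card_pos.mp (by omega)
  obtain ⟨x, hx⟩ := hne
  have h0 : ((0 : ℕ), (0 : ℕ)) ∈ μ.cells :=
    (YoungDiagram.mem_cells _).mpr (zero_mem ((YoungDiagram.mem_cells x).mp hx))
  obtain ⟨y, hy, hyne⟩ : ∃ y ∈ μ.cells, y ≠ (0, 0) := by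
    by_contra hcon
    push_neg at hcon
    have : μ.cells ⊆ {(0, 0)} := fun z hz => Finset.mem_singleton.mpr (hcon z hz)
    have := Finset.card_le_card this
    simp only [Finset.card_singleton] at this
    omega
  have hcells : μ.cells = {(0, 0), y} := by
    symm
    apply Finset.eq_of_subset_of_card_le
    · intro z hz
      rcases Finset.mem_insert.mp hz with rfl | hz
      · exact h0
      · rwa [Finset.mem_singleton.mp hz]
    · rw [h', Finset.card_insert_of_notMem (by simpa using Ne.symm hyne)]
      simp
  obtain ⟨p, q⟩ := y
  have hpq : (p, q) ∈ μ := (YoungDiagram.mem_cells _).mp hy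
  have key : ∀ z : ℕ × ℕ, z ∈ μ → z = (0, 0) ∨ z = (p, q) := by
    intro z hz
    have := (YoungDiagram.mem_cells z).mpr hz
    rw [hcells] at this
    simpa using this
  rcases Nat.eq_zero_or_pos p with rfl | hp
  · -- y = (0, q), q ≥ 1
    have hq : q ≠ 0 := by rintro rfl; exact hyne rfl
    have hq1 : q = 1 := by
      by_contra hq1
      have : ((0 : ℕ), (1 : ℕ)) ∈ μ := μ.up_left_mem le_rfl (by omega) hpq
      rcases key _ this with h' | h' <;> simp [Prod.ext_iff] at h' <;> omega
    left
    apply YoungDiagram.ext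
    rw [hcells, hq1]
    rfl
  · rcases Nat.eq_zero_or_pos q with rfl | hq
    · have hp1 : p = 1 := by
        by_contra hp1
        have : ((1 : ℕ), (0 : ℕ)) ∈ μ := μ.up_left_mem (by omega) le_rfl hpq
        rcases key _ this with h' | h' <;> simp [Prod.ext_iff] at h' <;> omega
      right
      apply YoungDiagram.ext
      rw [hcells, hp1]
      rfl
    · exfalso
      have h01 : ((0 : ℕ), (1 : ℕ)) ∈ μ := μ.up_left_mem (Nat.zero_le _) (by omega) hpq
      rcases key _ h01 with h' | h' <;> simp [Prod.ext_iff] at h' <;> omega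

/-- main induction: if σ fixes the two dominoes, it is the identity. -/
lemma main_induction (σ : YoungDiagram → YoungDiagram)
    (hbij : Function.Bijective σ)
    (hcard : ∀ μ : YoungDiagram, (σ μ).card = μ.card)
    (hcov : ∀ μ ν : YoungDiagram, CoveredBy ν μ ↔ CoveredBy (σ ν) (σ μ))
    (hh : σ horiz = horiz) (hv : σ vert = vert) :
    ∀ μ : YoungDiagram, σ μ = μ := by
  suffices h : ∀ n : ℕ, ∀ μ : YoungDiagram, μ.card = n → σ μ = μ by
    intro μ; exact h μ.card μ rfl
  intro n
  induction n using Nat.strong_induction_on with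
  | _ n ih =>
    intro μ hμ
    match n, hμ with
    | 0, hμ =>
      have h1 : μ = ⊥ := eq_bot_of_card_eq_zero hμ
      have h2 : σ μ = ⊥ := eq_bot_of_card_eq_zero (by rw [hcard, hμ])
      rw [h1] at h2 ⊢; rw [h2]
    | 1, hμ =>
      have h1 : μ = single := classify1 hμ
      have h2 : σ μ = single := classify1 (by rw [hcard, hμ])
      rw [h1] at h2 ⊢; rw [h2]
    | 2, hμ =>
      rcases classify2 hμ with rfl | rfl
      · exact hh
      · exact hv
    | (n + 3), hμ =>
      have hbot : μ ≠ ⊥ := by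
        intro hb; rw [hb, card_bot] at hμ; omega
      obtain ⟨c, hrc⟩ := exists_removable hbot
      have hcov₀ : CoveredBy (erase μ c hrc) μ := coveredBy_erase hrc
      -- fact: every ν covered by μ has σ ν = ν
      have hfix : ∀ ν, CoveredBy ν μ → σ ν = ν := by
        intro ν hν
        have : ν.card = n + 2 := by have := hν.2; omega
        exact ih (n + 2) (by omega) ν this
      by_cases hA : ∃ ν₁ ν₂ : YoungDiagram, CoveredBy ν₁ μ ∧ CoveredBy ν₂ μ ∧ ν₁ ≠ ν₂
      · -- two distinct covered diagrams
        obtain ⟨ν₁, ν₂, hν₁, hν₂, hne⟩ := hA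
        have hs₁ : CoveredBy ν₁ (σ μ) := by
          have := (hcov μ ν₁).mp hν₁; rwa [hfix _ hν₁] at this
        have hs₂ : CoveredBy ν₂ (σ μ) := by
          have := (hcov μ ν₂).mp hν₂; rwa [hfix _ hν₂] at this
        have hcu : n + 3 ≤ (ν₁.cells ∪ ν₂.cells).card := by
          have hss : ν₁.cells ⊂ ν₁.cells ∪ ν₂.cells := by
            refine Finset.ssubset_iff_of_subset Finset.subset_union_left |>.mpr ?_
            by_contra hcon
            push_neg at hcon
            have hsub : ν₂.cells ⊆ ν₁.cells := by
              intro z hz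
              by_contra hzz
              exact hzz (hcon z (Finset.mem_union_right _ hz))
            have : ν₂ = ν₁ := by
              apply YoungDiagram.ext
              apply Finset.eq_of_subset_of_card_le hsub
              have hμ' : μ.cells.card = n + 3 := hμ
              have e1 : μ.cells.card = ν₁.cells.card + 1 := hν₁.2
              have e2 : μ.cells.card = ν₂.cells.card + 1 := hν₂.2
              omega
            exact hne this.symm
          have := Finset.card_lt_card hss
          have hμ' : μ.cells.card = n + 3 := hμ
          have e1 : μ.cells.card = ν₁.cells.card + 1 := hν₁.2
          omega
        have hcells : ∀ τ : YoungDiagram, τ.card = n + 3 → CoveredBy ν₁ τ → CoveredBy ν₂ τ →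
            τ.cells = ν₁.cells ∪ ν₂.cells := by
          intro τ hτ h1 h2
          symm
          apply Finset.eq_of_subset_of_card_le
          · apply Finset.union_subset <;> intro z hz
            · exact h1.1 hz
            · exact h2.1 hz
          · have : τ.cells.card = n + 3 := hτ
            omega
        have e₁ : μ.cells = ν₁.cells ∪ ν₂.cells := hcells μ hμ hν₁ hν₂
        have e₂ : (σ μ).cells = ν₁.cells ∪ ν₂.cells :=
          hcells (σ μ) (by rw [hcard, hμ]) hs₁ hs₂
        exact YoungDiagram.ext (e₂.trans e₁.symm)
      · -- unique covered diagram
        push_neg at hA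
        have hu₁ : ∀ ρ₁ ρ₂, CoveredBy ρ₁ μ → CoveredBy ρ₂ μ → ρ₁ = ρ₂ := by
          intro ρ₁ ρ₂ h1 h2
          by_contra hne
          exact hne (by_contra fun hne' => hne' (by
            rcases eq_or_ne ρ₁ ρ₂ with h | h
            · exact h
            · exact absurd h (by simpa using hA ρ₁ ρ₂ h1 h2)))
        set ν₀ := erase μ c hrc with hν₀
        have hs₀ : CoveredBy ν₀ (σ μ) := by
          have := (hcov μ ν₀).mp hcov₀; rwa [hfix _ hcov₀] at this
        have hu₂ : ∀ ρ₁ ρ₂, CoveredBy ρ₁ (σ μ) → CoveredBy ρ₂ (σ μ) → ρ₁ = ρ₂ := by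
          intro ρ₁ ρ₂ h1 h2
          obtain ⟨τ₁, rfl⟩ := hbij.2 ρ₁
          obtain ⟨τ₂, rfl⟩ := hbij.2 ρ₂
          have g1 : CoveredBy τ₁ μ := (hcov μ τ₁).mpr h1
          have g2 : CoveredBy τ₂ μ := (hcov μ τ₂).mpr h2
          rw [hu₁ τ₁ τ₂ g1 g2]
        have hν₀card : 2 ≤ ν₀.card := by
          have := hcov₀.2; omega
        exact (unique_cover_ext hν₀card hs₀ hcov₀ hu₂ hu₁).symm ▸ rfl

lemma card_horiz : horiz.card = 2 := by decide

lemma card_vert : vert.card = 2 := by decide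

end YL

/-- The only rank-preserving automorphisms of Young's lattice (the branching graph of
Young diagrams with the covering relation) are the identity and the transposition. -/
theorem young_lattice_automorphisms (σ : YoungDiagram → YoungDiagram)
    (hbij : Function.Bijective σ)
    (hcard : ∀ μ : YoungDiagram, (σ μ).card = μ.card)
    (hcov : ∀ μ ν : YoungDiagram, CoveredBy ν μ ↔ CoveredBy (σ ν) (σ μ)) :
    (∀ μ : YoungDiagram, σ μ = μ) ∨ (∀ μ : YoungDiagram, σ μ = μ.transpose) := by
  rcases YL.classify2 (show (σ YL.horiz).card = 2 by rw [hcard]; exact YL.card_horiz)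
      with hh | hh
  · -- σ fixes horiz
    have hv : σ YL.vert = YL.vert := by
      rcases YL.classify2 (show (σ YL.vert).card = 2 by rw [hcard]; exact YL.card_vert)
          with h | h
      · exact absurd (hbij.1 (h.trans hh.symm)) (Ne.symm YL.horiz_ne_vert)
      · exact h
    exact Or.inl (YL.main_induction σ hbij hcard hcov hh hv)
  · -- σ horiz = vert; compose with transpose
    have htb : Function.Bijective (YoungDiagram.transpose) :=
      Function.Involutive.bijective YoungDiagram.transpose_transpose
    have hbij' : Function.Bijective (fun μ => (σ μ).transpose) := htb.comp hbij
    have hcard' : ∀ μ : YoungDiagram, ((fun μ => (σ μ).transpose) μ).card = μ.card :=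
      fun μ => (YL.card_transpose _).trans (hcard μ)
    have hcov' : ∀ μ ν : YoungDiagram,
        CoveredBy ν μ ↔ CoveredBy ((σ ν).transpose) ((σ μ).transpose) :=
      fun μ ν => (hcov μ ν).trans YL.coveredBy_transpose_iff.symm
    have hh' : (σ YL.horiz).transpose = YL.horiz := by rw [hh, YL.transpose_vert]
    have hv' : (σ YL.vert).transpose = YL.vert := by
      rcases YL.classify2 (show (σ YL.vert).card = 2 by rw [hcard]; exact YL.card_vert)
          with h | h
      · rw [h, YL.transpose_horiz]
      · exact absurd (hbij.1 (hh.trans h.symm)) YL.horiz_ne_vert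
    have hid := YL.main_induction (fun μ => (σ μ).transpose) hbij' hcard' hcov' hh' hv'
    refine Or.inr fun μ => ?_
    have := hid μ
    exact (YoungDiagram.transpose_transpose (σ μ)).symm.trans (congrArg _ this)
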